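/- Let n, m₁, m₂ be positive integers, let k ≤ n be a natural number, and let V₁ ∈ ℂ^{n×m₁}, V₂ ∈ ℂ^{n×m₂} be matrices with rank(V₁) ≥ k and rank(V₂) ≥ k. If for every pair of n×n diagonal matrices D₁, D₂ with all diagonal entries nonzero we have rank([D₁V₁ | D₂V₂]) ≤ k, then there are at least n − k row indices t such that row t of V₁ and row t of V₂ are both zero (i.e., [V₁ | V₂] has at least n − k zero rows). (This is the deterministic core of Lemma 1 of the paper, where k = n/2: two transmitters interfering at a common receiver that each achieve rank n/2 while keeping the joint interference rank at most n/2 must be simultaneously silent in at least n/2 time slots.) -/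

import Mathlib

open Matrix LinearMap Submodule

/-- Deterministic core of Lemma 1: if two matrices each have rank at least `k`
and every nonzero diagonal scaling of them has joint rank at most `k`, then
they share at least `n - k` common zero rows. -/
theorem stmt_0 (n m₁ m₂ k : ℕ) (hn : 0 < n) (hm₁ : 0 < m₁) (hm₂ : 0 < m₂)
    (hk : k ≤ n)
    (V₁ : Matrix (Fin n) (Fin m₁) ℂ) (V₂ : Matrix (Fin n) (Fin m₂) ℂ)
    (hr₁ : k ≤ V₁.rank) (hr₂ : k ≤ V₂.rank)
    (h : ∀ d₁ d₂ : Fin n → ℂ, (∀ t, d₁ t ≠ 0) → (∀ t, d₂ t ≠ 0) →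
      (Matrix.fromCols (Matrix.diagonal d₁ * V₁) (Matrix.diagonal d₂ * V₂)).rank ≤ k) :
    n - k ≤ {t : Fin n | (∀ c, V₁ t c = 0) ∧ (∀ c, V₂ t c = 0)}.ncard := by
  classical
  -- ranges live in Fin n → ℂ
  -- range of fromColumns contains ranges of components
  have hrangeA : ∀ (A : Matrix (Fin n) (Fin m₁) ℂ) (B : Matrix (Fin n) (Fin m₂) ℂ),
      LinearMap.range A.mulVecLin ≤ LinearMap.range (fromCols A B).mulVecLin := by
    rintro A B x ⟨v, rfl⟩
    exact ⟨Sum.elim v 0, by simp [Matrix.mulVecLin_apply]⟩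
  have hrangeB : ∀ (A : Matrix (Fin n) (Fin m₁) ℂ) (B : Matrix (Fin n) (Fin m₂) ℂ),
      LinearMap.range B.mulVecLin ≤ LinearMap.range (fromCols A B).mulVecLin := by
    rintro A B x ⟨v, rfl⟩
    exact ⟨Sum.elim 0 v, by simp [Matrix.mulVecLin_apply]⟩
  set R : Submodule ℂ (Fin n → ℂ) := LinearMap.range V₂.mulVecLin with hR
  have hdiag1 : Matrix.diagonal (fun _ : Fin n => (1:ℂ)) = 1 := Matrix.diagonal_one
  have one_ne : ∀ t : Fin n, (1:ℂ) ≠ 0 := fun t => one_ne_zero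
  have h11 := h (fun _ => 1) (fun _ => 1) one_ne one_ne
  rw [hdiag1, Matrix.one_mul, Matrix.one_mul] at h11
  -- rank V₂ = k
  have hV2le : V₂.rank ≤ k :=
    le_trans (by
      rw [Matrix.rank, Matrix.rank]
      exact Submodule.finrank_mono (hrangeB V₁ V₂)) h11
  have hV2 : Module.finrank ℂ R = k := le_antisymm hV2le hr₂
  -- range (fromCols V₁ V₂) = R
  have hbig : LinearMap.range (fromCols V₁ V₂).mulVecLin = R := by
    symm
    apply Submodule.eq_of_le_of_finrank_le (hrangeB V₁ V₂)
    rw [hV2]; exact h11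
  have hV1R : LinearMap.range V₁.mulVecLin = R := by
    apply Submodule.eq_of_le_of_finrank_le (hbig ▸ hrangeA V₁ V₂)
    rw [hV2]; exact hr₁
  -- invariance under nonzero diagonal scalings
  have hinv : ∀ d : Fin n → ℂ, (∀ t, d t ≠ 0) → ∀ w ∈ R, (Matrix.diagonal d) *ᵥ w ∈ R := by
    intro d hd w hw
    have hd1 := h d (fun _ => 1) hd one_ne
    rw [hdiag1, Matrix.one_mul] at hd1
    have hbig' : LinearMap.range (fromCols (Matrix.diagonal d * V₁) V₂).mulVecLin = R := by
      symm
      apply Submodule.eq_of_le_of_finrank_le (hrangeB _ V₂)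
      rw [hV2]; exact hd1
    have h1 : LinearMap.range (Matrix.diagonal d * V₁).mulVecLin ≤ R :=
      hbig' ▸ hrangeA _ V₂
    rw [← hV1R] at hw
    obtain ⟨v, rfl⟩ := hw
    exact h1 ⟨v, by rw [Matrix.mulVecLin_mul]; rfl⟩
  -- hence single t (w t) ∈ R
  have hsingle : ∀ (t : Fin n), ∀ w ∈ R, Pi.single t (w t) ∈ R := by
    intro t w hw
    set d : Fin n → ℂ := fun i => if i = t then 2 else 1 with hd
    have hdne : ∀ i, d i ≠ 0 := by intro i; simp [hd]; split <;> norm_num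
    have h1 : Matrix.diagonal d *ᵥ w ∈ R := hinv d hdne w hw
    have h2 : Matrix.diagonal d *ᵥ w - w ∈ R := R.sub_mem h1 hw
    have : Matrix.diagonal d *ᵥ w - w = Pi.single t (w t) := by
      ext i
      rw [Pi.sub_apply, Matrix.mulVec_diagonal]
      by_cases hi : i = t
      · subst hi; simp [hd]; ring
      · simp [hd, hi, Pi.single_eq_of_ne hi]
    rwa [this] at h2
  -- T' : coordinates supported
  set T : Set (Fin n) := {t | Pi.single t (1 : ℂ) ∈ R} with hT
  -- card T ≤ k
  have hTcard : T.ncard ≤ k := by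
    have li : LinearIndependent ℂ (fun t : T => (⟨Pi.single (t : Fin n) (1:ℂ), t.2⟩ : R)) := by
      apply LinearIndependent.of_comp R.subtype
      have : (R.subtype ∘ fun t : T => (⟨Pi.single (t : Fin n) (1:ℂ), t.2⟩ : R)) =
          (fun t : T => Pi.single (t : Fin n) (1:ℂ)) := rfl
      rw [this]
      have hb := (Pi.basisFun ℂ (Fin n)).linearIndependent
      have h2 := hb.comp (fun t : T => (t : Fin n)) Subtype.val_injective
      have e : (⇑(Pi.basisFun ℂ (Fin n)) ∘ fun t : T => (t : Fin n)) =
          fun t : T => Pi.single (t : Fin n) (1:ℂ) := by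
        funext t; simp [Pi.basisFun_apply]
      rwa [e] at h2
    have := li.fintype_card_le_finrank
    rw [hV2] at this
    rwa [Set.ncard_eq_toFinset_card', Set.toFinset_card]
  -- complement of zero-row set is contained in T
  set S : Set (Fin n) := {t : Fin n | (∀ c, V₁ t c = 0) ∧ (∀ c, V₂ t c = 0)} with hS
  have hcompl : Sᶜ ⊆ T := by
    intro t ht
    simp only [hS, Set.mem_compl_iff, Set.mem_setOf_eq, not_and_or, not_forall] at ht
    have key : ∃ w ∈ R, w t ≠ 0 := by
      rcases ht with ⟨c, hc⟩ | ⟨c, hc⟩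
      · refine ⟨V₁ *ᵥ Pi.single c 1, ?_, ?_⟩
        · rw [← hV1R]; exact ⟨Pi.single c 1, rfl⟩
        · simpa [Matrix.mulVec_single] using hc
      · refine ⟨V₂ *ᵥ Pi.single c 1, ⟨Pi.single c 1, rfl⟩, ?_⟩
        simpa [Matrix.mulVec_single] using hc
    obtain ⟨w, hw, hwt⟩ := key
    have h1 : Pi.single t (w t) ∈ R := hsingle t w hw
    have h2 : (w t)⁻¹ • (Pi.single t (w t) : Fin n → ℂ) ∈ R := R.smul_mem _ h1
    have : (w t)⁻¹ • (Pi.single t (w t) : Fin n → ℂ) = Pi.single t (1 : ℂ) := by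
      ext i
      by_cases hi : i = t
      · subst hi; simp [inv_mul_cancel₀ hwt]
      · simp [Pi.single_eq_of_ne hi]
    rwa [this] at h2
  have hSc : Sᶜ.ncard ≤ k := le_trans (Set.ncard_le_ncard hcompl T.toFinite) hTcard
  have := Set.ncard_add_ncard_compl S
  rw [Nat.card_eq_fintype_card, Fintype.card_fin] at this
  omega
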